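/- In the latent-variable multinomial model with the IDM near-ignorance set of priors M₀ = {dir_{s,t} : t in the open k-simplex} (s > 0 fixed), if all entries of all emission matrices Λ(S_i) are strictly nonzero, then for every observed manifest dataset s and every outcome x_j, the posterior predictive probabilities are vacuous: sup_{t} P_t(X_{n+1} = x_j | s) = 1 and inf_t P_t(X_{n+1} = x_j | s) = 0. -/

import Mathlib

open Finset Set

/-- Number of occurrences of outcome `j` in the latent dataset `x`. -/
def count {k n : ℕ} (x : Fin n → Fin k) (j : Fin k) : ℕ :=
  (Finset.univ.filter fun i => x i = j).card

/-- The Dirichlet marginal probability `P_t(x)` of a latent dataset `x`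
under the prior `dir_{s,t}`. -/
noncomputable def margP {k n : ℕ} (s : ℝ) (t : Fin k → ℝ) (x : Fin n → Fin k) : ℝ :=
  (∏ h, ∏ l ∈ Finset.range (count x h), (s * t h + (l : ℝ))) /
    ∏ l ∈ Finset.range n, (s + (l : ℝ))

/-- The posterior predictive probability `P_t(X_{n+1} = x_j | s)` under the prior
`dir_{s,t}`, where `Ps x = P(s|x)` is the emission likelihood of the observed
manifest dataset: the convex combination
`Σ_x [P(s|x)P_t(x)/Σ_{x'}P(s|x')P_t(x')] · (a_j^x + s t_j)/(n+s)`. -/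
noncomputable def postPred {k n : ℕ} (s : ℝ) (t : Fin k → ℝ)
    (Ps : (Fin n → Fin k) → ℝ) (j : Fin k) : ℝ :=
  ∑ x : Fin n → Fin k,
    (Ps x * margP s t x / ∑ x' : Fin n → Fin k, Ps x' * margP s t x') *
      (((count x j : ℝ) + s * t j) / ((n : ℝ) + s))

/-- The open `k`-simplex of hyperparameters of the IDM. -/
def openSimplex (k : ℕ) : Set (Fin k → ℝ) := {t | (∀ i, 0 < t i) ∧ ∑ i, t i = 1}

namespace Stmt16Aux

open Filter Topology

variable {k n : ℕ}

lemma count_const (j : Fin k) : count (fun _ : Fin n => j) j = n := by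
  simp [count]

lemma count_const_ne {h j : Fin k} (hne : h ≠ j) :
    count (fun _ : Fin n => h) j = 0 := by
  simp [count, hne]

lemma count_le (x : Fin n → Fin k) (j : Fin k) : count x j ≤ n := by
  simpa [count] using (Finset.card_filter_le Finset.univ fun i => x i = j)

lemma denom_pos {s : ℝ} (hs : 0 < s) :
    0 < ∏ l ∈ Finset.range n, (s + (l : ℝ)) :=
  Finset.prod_pos fun l _ => by positivity

lemma margP_pos {s : ℝ} (hs : 0 < s) {t : Fin k → ℝ} (ht : ∀ i, 0 < t i)
    (x : Fin n → Fin k) : 0 < margP s t x := by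
  unfold margP
  refine div_pos (Finset.prod_pos fun h _ => Finset.prod_pos fun l _ => ?_) (denom_pos hs)
  have := ht h
  positivity

/-- Vertex of the simplex. -/
def vert (j : Fin k) : Fin k → ℝ := fun i => if i = j then 1 else 0

lemma margP_vert_self {s : ℝ} (hs : 0 < s) (j : Fin k) :
    margP s (vert j) (fun _ : Fin n => j) = 1 := by
  unfold margP
  rw [div_eq_one_iff_eq (ne_of_gt (denom_pos hs))]
  rw [Finset.prod_eq_single j]
  · simp [vert, count_const]
  · intro b _ hb
    rw [count_const_ne (Ne.symm hb)]
    simp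
  · simp

lemma margP_vert_ne {s : ℝ} (j : Fin k) {x : Fin n → Fin k}
    (hx : x ≠ fun _ => j) : margP s (vert j) x = 0 := by
  obtain ⟨i, hi⟩ : ∃ i, x i ≠ j := by
    by_contra hc; push_neg at hc; exact hx (funext hc)
  unfold margP
  rw [div_eq_zero_iff]
  left
  refine Finset.prod_eq_zero (Finset.mem_univ (x i)) ?_
  refine Finset.prod_eq_zero (i := 0) ?_ ?_
  · rw [Finset.mem_range]
    exact Finset.card_pos.2 ⟨i, by simp [count]⟩
  · simp [vert, hi]

lemma sum_margP_vert {s : ℝ} (hs : 0 < s) (Ps : (Fin n → Fin k) → ℝ) (h : Fin k) :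
    ∑ x' : Fin n → Fin k, Ps x' * margP s (vert h) x' = Ps (fun _ => h) := by
  rw [Finset.sum_eq_single (fun _ => h)]
  · rw [margP_vert_self hs, mul_one]
  · intro x _ hx; rw [margP_vert_ne h hx, mul_zero]
  · simp

lemma postPred_vert {s : ℝ} (hs : 0 < s) {Ps : (Fin n → Fin k) → ℝ}
    (hPs : ∀ x, 0 < Ps x) (h j : Fin k) :
    postPred s (vert h) Ps j = if h = j then 1 else 0 := by
  have hns : (0:ℝ) < (n : ℝ) + s := by positivity
  unfold postPred
  rw [sum_margP_vert hs]
  rw [Finset.sum_eq_single (fun _ => h)]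
  · rw [margP_vert_self hs, mul_one, div_self (hPs _).ne', one_mul]
    by_cases hhj : h = j
    · subst hhj
      have hv : vert h h = 1 := if_pos rfl
      rw [count_const, if_pos rfl, hv, mul_one]
      exact div_self hns.ne'
    · have hv : vert h j = 0 := if_neg (Ne.symm hhj)
      rw [count_const_ne hhj, if_neg hhj, hv, mul_zero]
      simp
  · intro x _ hx
    rw [margP_vert_ne h hx, mul_zero, zero_div, zero_mul]
  · simp

lemma sum_pos {s : ℝ} (hk : 0 < k) (hs : 0 < s) {Ps : (Fin n → Fin k) → ℝ}
    (hPs : ∀ x, 0 < Ps x) {t : Fin k → ℝ} (ht : ∀ i, 0 < t i) :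
    0 < ∑ x' : Fin n → Fin k, Ps x' * margP s t x' := by
  have : Nonempty (Fin k) := ⟨⟨0, hk⟩⟩
  exact Finset.sum_pos (fun x _ => mul_pos (hPs x) (margP_pos hs ht x)) ⟨fun _ => Classical.arbitrary _, Finset.mem_univ _⟩

lemma postPred_bounds {s : ℝ} (hk : 0 < k) (hs : 0 < s) {Ps : (Fin n → Fin k) → ℝ}
    (hPs : ∀ x, 0 < Ps x) {t : Fin k → ℝ} (ht : t ∈ openSimplex k) (j : Fin k) :
    postPred s t Ps j ∈ Set.Icc (0:ℝ) 1 := by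
  obtain ⟨htp, hts⟩ := ht
  have hns : (0:ℝ) < (n : ℝ) + s := by positivity
  have hD : 0 < ∑ x' : Fin n → Fin k, Ps x' * margP s t x' := sum_pos hk hs hPs htp
  have htj1 : t j ≤ 1 := by
    rw [← hts]
    exact Finset.single_le_sum (fun i _ => (htp i).le) (Finset.mem_univ j)
  constructor
  · refine Finset.sum_nonneg fun x _ => mul_nonneg ?_ ?_
    · exact div_nonneg (mul_nonneg (hPs x).le (margP_pos hs htp x).le) hD.le
    · refine div_nonneg ?_ hns.le
      have := (htp j).le
      positivity
  · calc postPred s t Ps j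
        ≤ ∑ x : Fin n → Fin k,
            (Ps x * margP s t x / ∑ x' : Fin n → Fin k, Ps x' * margP s t x') * 1 := by
          refine Finset.sum_le_sum fun x _ => ?_
          refine mul_le_mul_of_nonneg_left ?_
            (div_nonneg (mul_nonneg (hPs x).le (margP_pos hs htp x).le) hD.le)
          rw [div_le_one hns]
          have h1 : (count x j : ℝ) ≤ (n : ℝ) := by exact_mod_cast count_le x j
          have h2 : s * t j ≤ s := by nlinarith
          linarith
      _ = 1 := by
          simp only [mul_one]
          rw [← Finset.sum_div, div_self hD.ne']

lemma continuousAt_postPred {s : ℝ} {Ps : (Fin n → Fin k) → ℝ} (j : Fin k)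
    {t0 : Fin k → ℝ} (hD : (∑ x' : Fin n → Fin k, Ps x' * margP s t0 x') ≠ 0) :
    ContinuousAt (fun t => postPred s t Ps j) t0 := by
  have hm : ∀ x : Fin n → Fin k, Continuous fun t : Fin k → ℝ => margP s t x := by
    intro x
    unfold margP
    refine Continuous.div_const ?_ _
    exact continuous_finset_prod _ fun h _ => continuous_finset_prod _ fun l _ => by
      exact (continuous_const.mul (continuous_apply h)).add continuous_const
  have hDc : Continuous fun t : Fin k → ℝ => ∑ x' : Fin n → Fin k, Ps x' * margP s t x' :=
    continuous_finset_sum _ fun x _ => continuous_const.mul (hm x)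
  unfold postPred
  refine tendsto_finset_sum _ fun x _ => ContinuousAt.mul ?_ ?_
  · exact ContinuousAt.div (continuous_const.mul (hm x)).continuousAt hDc.continuousAt hD
  · exact Continuous.continuousAt (by
      exact ((continuous_const.add (continuous_const.mul (continuous_apply j))).div_const _))

/-- The path approaching the vertex `h` inside the open simplex. -/
noncomputable def path (k : ℕ) (h : Fin k) (ε : ℝ) : Fin k → ℝ :=
  fun i => if i = h then 1 - ε else ε / ((k : ℝ) - 1)

lemma path_mem (hk : 2 ≤ k) (h : Fin k) {ε : ℝ} (h0 : 0 < ε) (h1 : ε < 1) :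
    path k h ε ∈ openSimplex k := by
  have hk1 : (0:ℝ) < (k : ℝ) - 1 := by
    have : (2:ℝ) ≤ (k : ℝ) := by exact_mod_cast hk
    linarith
  constructor
  · intro i
    simp only [path]
    split
    · linarith
    · positivity
  · simp only [path]
    rw [← Finset.add_sum_erase _ _ (Finset.mem_univ h), if_pos rfl]
    rw [Finset.sum_congr rfl fun i hi => if_neg (Finset.ne_of_mem_erase hi)]
    rw [Finset.sum_const, Finset.card_erase_of_mem (Finset.mem_univ h), Finset.card_univ,
      Fintype.card_fin, nsmul_eq_mul]
    have hcast : ((k - 1 : ℕ) : ℝ) = (k : ℝ) - 1 := by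
      have : 1 ≤ k := le_trans one_le_two hk
      push_cast [Nat.cast_sub this]
      ring
    rw [hcast, mul_div_cancel₀ _ hk1.ne']
    ring

lemma path_tendsto (h : Fin k) :
    Tendsto (path k h) (nhdsWithin (0:ℝ) (Set.Ioi 0)) (nhds (vert h)) := by
  have hc : Continuous (path k h) := by
    refine continuous_pi fun i => ?_
    by_cases hih : i = h
    · simpa only [path, if_pos hih] using (by fun_prop : Continuous fun a : ℝ => 1 - a)
    · simpa only [path, if_neg hih] using (by fun_prop : Continuous fun a : ℝ => a / ((k : ℝ) - 1))
  have h0 : path k h 0 = vert h := by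
    funext i
    by_cases hih : i = h <;> simp [path, vert, hih]
  rw [← h0]
  exact (hc.tendsto 0).mono_left nhdsWithin_le_nhds

lemma tendsto_postPred {s : ℝ} (hs : 0 < s) {Ps : (Fin n → Fin k) → ℝ}
    (hPs : ∀ x, 0 < Ps x) (h j : Fin k) :
    Tendsto (fun ε => postPred s (path k h ε) Ps j) (nhdsWithin (0:ℝ) (Set.Ioi 0))
      (nhds (if h = j then 1 else 0)) := by
  rw [← postPred_vert hs hPs h j]
  have hD : (∑ x' : Fin n → Fin k, Ps x' * margP s (vert h) x') ≠ 0 := by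
    rw [sum_margP_vert hs]
    exact (hPs _).ne'
  exact ((continuousAt_postPred j hD).tendsto).comp (path_tendsto h)

end Stmt16Aux

open Stmt16Aux Filter Topology in
/-- IDM with latent variables: if all entries of all emission matrices are strictly
positive (`lam i j = P(S_i = s_i^{obs} | X_i = x_j) > 0`), then for every observed
manifest dataset the posterior predictive probabilities of the next latent outcome
remain vacuous: the upper probability is `1` and the lower probability is `0`. -/
theorem stmt_16 (k n : ℕ) (hk : 2 ≤ k) (s : ℝ) (hs : 0 < s)
    (lam : Fin n → Fin k → ℝ) (hlam : ∀ i j, 0 < lam i j) :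
    ∀ j : Fin k,
      sSup ((fun t => postPred s t (fun x => ∏ i, lam i (x i)) j) '' openSimplex k)
          = 1 ∧
      sInf ((fun t => postPred s t (fun x => ∏ i, lam i (x i)) j) '' openSimplex k)
          = 0 := by
  intro j
  set Ps : (Fin n → Fin k) → ℝ := fun x => ∏ i, lam i (x i) with hPsdef
  have hPs : ∀ x, 0 < Ps x := fun x => Finset.prod_pos fun i _ => hlam i (x i)
  have hk0 : 0 < k := lt_of_lt_of_le two_pos hk
  set F : (Fin k → ℝ) → ℝ := fun t => postPred s t Ps j with hFdef
  set S : Set ℝ := F '' openSimplex k with hSdef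
  have hhalf : path k j (1/2) ∈ openSimplex k := path_mem hk j (by norm_num) (by norm_num)
  have hSne : S.Nonempty := ⟨F (path k j (1/2)), ⟨_, hhalf, rfl⟩⟩
  have hub : ∀ y ∈ S, y ≤ 1 := by
    rintro y ⟨t, ht, rfl⟩
    exact (postPred_bounds hk0 hs hPs ht j).2
  have hlb : ∀ y ∈ S, 0 ≤ y := by
    rintro y ⟨t, ht, rfl⟩
    exact (postPred_bounds hk0 hs hPs ht j).1
  have hbddA : BddAbove S := ⟨1, hub⟩
  have hbddB : BddBelow S := ⟨0, hlb⟩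
  have hev1 : ∀ᶠ ε in nhdsWithin (0:ℝ) (Set.Ioi 0), 0 < ε ∧ ε < 1 := by
    filter_upwards [self_mem_nhdsWithin,
      eventually_nhdsWithin_of_eventually_nhds (eventually_lt_nhds one_pos)] with ε h1 h2
    exact ⟨h1, h2⟩
  constructor
  · refine le_antisymm (csSup_le hSne hub) ?_
    by_contra hlt
    push_neg at hlt
    have htd := tendsto_postPred hs hPs j j
    rw [if_pos rfl] at htd
    have hev2 : ∀ᶠ ε in nhdsWithin (0:ℝ) (Set.Ioi 0), sSup S < F (path k j ε) :=
      htd.eventually (eventually_gt_nhds hlt)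
    obtain ⟨ε, ⟨h0, h1⟩, h2⟩ := (hev1.and hev2).exists
    have hmem : F (path k j ε) ∈ S := ⟨_, path_mem hk j h0 h1, rfl⟩
    exact absurd (le_csSup hbddA hmem) (not_le.2 h2)
  · refine le_antisymm ?_ (le_csInf hSne hlb)
    by_contra hlt
    push_neg at hlt
    obtain ⟨h, hhj⟩ := Fintype.exists_ne_of_one_lt_card (by rw [Fintype.card_fin]; omega) j
    have htd := tendsto_postPred hs hPs h j
    rw [if_neg hhj] at htd
    have hev2 : ∀ᶠ ε in nhdsWithin (0:ℝ) (Set.Ioi 0), F (path k h ε) < sInf S :=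
      htd.eventually (eventually_lt_nhds hlt)
    obtain ⟨ε, ⟨h0, h1⟩, h2⟩ := (hev1.and hev2).exists
    have hmem : F (path k h ε) ∈ S := ⟨_, path_mem hk h h0 h1, rfl⟩
    exact absurd (csInf_le hbddB hmem) (not_le.2 h2)
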